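/- Let p ≥ 0 and F > 0 be real numbers, and let (h_k)_{k≥0} be a sequence of nonnegative reals satisfying h₀^{p+1} ≤ F and h_{k+1} ≤ h_k − h_k^{p+2}/(max(8, p+2)·F) for all k ≥ 0. Then for all k ≥ 0, h_k ≤ (F / (((p+1)/max(8, p+2))·k + 1))^{1/(p+1)}. -/

import Mathlib

open Real

/-- Stage-3 bound of the adaptive-δ convergence theorem (Theorem C.5): a
nonnegative sequence with `h₀^{p+1} ≤ F` and
`h_{k+1} ≤ h_k − h_k^{p+2}/(max(8, p+2)·F)` satisfies
`h_k ≤ (F / (((p+1)/max(8, p+2))·k + 1))^{1/(p+1)}`. -/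
theorem stage3_recurrence_bound
    (p F : ℝ) (hp : 0 ≤ p) (hF : 0 < F)
    (h : ℕ → ℝ) (hnonneg : ∀ k, 0 ≤ h k)
    (hinit : h 0 ^ (p + 1) ≤ F)
    (hrec : ∀ k : ℕ, h (k + 1) ≤ h k - h k ^ (p + 2) / (max 8 (p + 2) * F)) :
    ∀ k : ℕ, h k ≤ (F / ((p + 1) / max 8 (p + 2) * k + 1)) ^ (1 / (p + 1)) := by
  set b : ℝ := max 8 (p + 2) with hbdef
  have hb8 : (8 : ℝ) ≤ b := le_max_left _ _
  have hb1 : (1 : ℝ) ≤ b := by linarith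
  have hb0 : (0 : ℝ) < b := by linarith
  have hbF : 0 < b * F := mul_pos hb0 hF
  have hp1 : (0 : ℝ) < p + 1 := by linarith
  have key : ∀ k : ℕ, h k ^ (p + 1) ≤ F / ((p + 1) / b * k + 1) := by
    intro k
    induction k with
    | zero => simpa using hinit
    | succ k ih =>
      have ha : 0 ≤ h k := hnonneg k
      have hdenpos : 0 < (p + 1) / b * k + 1 := by positivity
      set U := F / ((p + 1) / b * k + 1) with hU
      have hU0 : 0 < U := div_pos hF hdenpos
      have hden1 : (1 : ℝ) ≤ (p + 1) / b * k + 1 := by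
        have : 0 ≤ (p + 1) / b * k := by positivity
        linarith
      have hUF : U ≤ F := div_le_self hF.le hden1
      set u := h k ^ (p + 1) with hu
      have hu0 : 0 ≤ u := rpow_nonneg ha _
      set x := u / (b * F) with hx
      have hx0 : 0 ≤ x := div_nonneg hu0 hbF.le
      have huU : u ≤ U := ih
      have hx1 : x ≤ 1 := by
        rw [hx, div_le_one hbF]
        calc u ≤ U := huU
          _ ≤ F := hUF
          _ ≤ b * F := le_mul_of_one_le_left hF.le hb1
      have h1x : 0 ≤ 1 - x := by linarith
      have hap2 : h k ^ (p + 2) = u * h k := by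
        have : h k ^ ((p + 1) + 1) = h k ^ (p + 1) * h k ^ (1 : ℝ) :=
          Real.rpow_add' ha (by linarith)
        rw [show p + 2 = (p + 1) + 1 by ring, this, Real.rpow_one, hu]
      have step1 : h (k + 1) ≤ h k * (1 - x) := by
        calc h (k + 1) ≤ h k - h k ^ (p + 2) / (b * F) := hrec k
          _ = h k * (1 - x) := by rw [hap2, hx]; field_simp
      have step2 : h (k + 1) ^ (p + 1) ≤ u * (1 - x) ^ (p + 1) := by
        have := Real.rpow_le_rpow (hnonneg (k + 1)) step1 hp1.le
        rwa [Real.mul_rpow ha h1x, ← hu] at this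
      have h1xp : 0 < 1 + x := by linarith
      have h1ppx : 0 < 1 + (p + 1) * x := by nlinarith
      have step3 : (1 - x) ^ (p + 1) ≤ 1 / (1 + (p + 1) * x) := by
        have e1 : (1 - x) ≤ 1 / (1 + x) := by
          rw [le_div_iff₀ h1xp]; nlinarith
        have e2 : (1 - x) ^ (p + 1) ≤ (1 / (1 + x)) ^ (p + 1) :=
          Real.rpow_le_rpow h1x e1 hp1.le
        have e3 : (1 / (1 + x)) ^ (p + 1) = 1 / (1 + x) ^ (p + 1) := by
          rw [Real.div_rpow zero_le_one h1xp.le, Real.one_rpow]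
        have bern : 1 + (p + 1) * x ≤ (1 + x) ^ (p + 1) :=
          one_add_mul_self_le_rpow_one_add (by linarith) (by linarith)
        have e4 : 1 / (1 + x) ^ (p + 1) ≤ 1 / (1 + (p + 1) * x) :=
          one_div_le_one_div_of_le h1ppx bern
        calc (1 - x) ^ (p + 1) ≤ (1 / (1 + x)) ^ (p + 1) := e2
          _ = 1 / (1 + x) ^ (p + 1) := e3
          _ ≤ 1 / (1 + (p + 1) * x) := e4
      have hDpos : 0 < 1 + (p + 1) * U / (b * F) := by positivity
      have step4 : u / (1 + (p + 1) * x) ≤ U / (1 + (p + 1) * U / (b * F)) := by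
        rw [div_le_div_iff₀ h1ppx hDpos, hx]
        have hmul := mul_le_mul_of_nonneg_right huU hbF.le
        have hbFne : (b * F) ≠ 0 := hbF.ne'
        field_simp
        nlinarith [mul_le_mul_of_nonneg_right huU hbF.le, hp1, hu0, hU0.le]
      have step5 : U / (1 + (p + 1) * U / (b * F)) =
          F / ((p + 1) / b * (k + 1 : ℕ) + 1) := by
        rw [hU]
        have hdne : ((p + 1) / b * k + 1) ≠ 0 := hdenpos.ne'
        have hbne : b ≠ 0 := hb0.ne'
        push_cast
        field_simp
        ring
      calc h (k + 1) ^ (p + 1) ≤ u * (1 - x) ^ (p + 1) := step2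
        _ ≤ u * (1 / (1 + (p + 1) * x)) :=
          mul_le_mul_of_nonneg_left step3 hu0
        _ = u / (1 + (p + 1) * x) := by ring
        _ ≤ U / (1 + (p + 1) * U / (b * F)) := step4
        _ = F / ((p + 1) / b * (k + 1 : ℕ) + 1) := step5
  intro k
  have hdenpos : 0 < (p + 1) / b * k + 1 := by positivity
  have := Real.rpow_le_rpow (rpow_nonneg (hnonneg k) _) (key k)
    (by positivity : (0:ℝ) ≤ 1 / (p + 1))
  rw [← Real.rpow_mul (hnonneg k), mul_one_div, div_self hp1.ne', Real.rpow_one] at this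
  exact this
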